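/- If I(M,K) denotes the maximum number of orthants of R^M intersected by a K-dimensional subspace, then I(M,K) ≤ (2M/K)·I(M-1, K-1) for K ≥ 2, and combining with I(M,1) = 2 this gives I(M,K) ≤ (2^K/(M-K+1))·C(M,K). -/

import Mathlib

/-- The set of (sign patterns of) orthants of `ℝ^M` nontrivially intersected by a set. -/
def intersectedOrthants (M : ℕ) (S : Submodule ℝ (Fin M → ℝ)) : Set (Fin M → Bool) :=
  {z | ∃ x ∈ S, x ≠ 0 ∧ ∀ i, (z i = true ↔ 0 < x i)}

/-- `I(M, K)`: the maximum number of orthants of `ℝ^M` intersected by a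
`K`-dimensional linear subspace. -/
noncomputable def maxOrthants (M K : ℕ) : ℕ :=
  sSup {n | ∃ S : Submodule ℝ (Fin M → ℝ),
    Module.finrank ℝ S = K ∧ n = (intersectedOrthants M S).ncard}

open Module Set

noncomputable section
set_option maxHeartbeats 1600000


/-- pattern set of a family of functionals -/
def pats {V : Type} [AddCommGroup V] [Module ℝ V] {m : ℕ} (f : Fin m → (V →ₗ[ℝ] ℝ)) :
    Set (Fin m → Bool) :=
  {z | ∃ v : V, v ≠ 0 ∧ ∀ i, (z i = true ↔ 0 < f i v)}

/-- Cover bound -/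
def cB (m k : ℕ) : ℕ := 2 * ∑ j ∈ Finset.range k, (m-1).choose j

lemma cB_mono_m (m k : ℕ) : cB m k ≤ cB (m+1) k := by
  unfold cB
  have : ∀ j ∈ Finset.range k, (m-1).choose j ≤ (m+1-1).choose j := by
    intro j _
    exact Nat.choose_le_choose j (by omega)
  exact Nat.mul_le_mul_left 2 (Finset.sum_le_sum this)

lemma sum_choose_pascal (n k : ℕ) :
    ∑ j ∈ Finset.range (k+1), (n+1).choose j
      = ∑ j ∈ Finset.range (k+1), n.choose j + ∑ j ∈ Finset.range k, n.choose j := by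
  induction k with
  | zero => simp
  | succ k ih =>
    rw [Finset.sum_range_succ, ih]
    have h2 : ∑ j ∈ Finset.range (k+1+1), n.choose j
        = ∑ j ∈ Finset.range (k+1), n.choose j + n.choose (k+1) := Finset.sum_range_succ _ _
    have h3 : ∑ j ∈ Finset.range (k+1), n.choose j
        = ∑ j ∈ Finset.range k, n.choose j + n.choose k := Finset.sum_range_succ _ _
    have h1 : (n+1).choose (k+1) = n.choose k + n.choose (k+1) := Nat.choose_succ_succ n k
    omega

lemma cB_pascal (n k : ℕ) (hn : 1 ≤ n) : cB (n+1) (k+1) = cB n (k+1) + cB n k := by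
  obtain ⟨n, rfl⟩ : ∃ n', n = n' + 1 := ⟨n - 1, by omega⟩
  unfold cB
  have : (n + 1 + 1 - 1) = n + 1 := by omega
  rw [this]
  have : (n + 1 - 1) = n := by omega
  rw [this, sum_choose_pascal]
  ring

lemma two_pow_le_cB (m k : ℕ) (hmk : m ≤ k) (hk : 1 ≤ k) : 2^m ≤ cB m k := by
  rcases Nat.eq_zero_or_pos m with hm | hm
  · subst hm
    have : (0:ℕ).choose 0 ≤ ∑ j ∈ Finset.range k, (0-1).choose j := by
      apply Finset.single_le_sum (f := fun j => (0:ℕ).choose j) (fun _ _ => Nat.zero_le _)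
      simp [Finset.mem_range]; omega
    simp only [cB]
    simp at this ⊢
    omega
  · obtain ⟨m', rfl⟩ : ∃ m', m = m' + 1 := ⟨m - 1, by omega⟩
    have h1 : ∑ j ∈ Finset.range (m'+1), (m'+1-1).choose j = 2^m' := by
      simpa using Nat.sum_range_choose m'
    have h2 : ∑ j ∈ Finset.range (m'+1), (m'+1-1).choose j
        ≤ ∑ j ∈ Finset.range k, (m'+1-1).choose j := by
      apply Finset.sum_le_sum_of_subset
      exact Finset.range_subset_range.2 hmk
    calc 2^(m'+1) = 2 * 2^m' := by ring
    _ ≤ 2 * ∑ j ∈ Finset.range k, (m'+1-1).choose j := by omega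
    _ = cB (m'+1) k := rfl

lemma cB_succ_k (n k : ℕ) : cB n (k+1) = cB n k + 2 * (n-1).choose k := by
  unfold cB; rw [Finset.sum_range_succ]; ring

lemma cB_one (m : ℕ) : cB m 1 = 2 := by simp [cB]

lemma cB_rec (M K : ℕ) (hK : 2 ≤ K) (hKM : K ≤ M) :
    K * cB M K ≤ 2 * M * cB (M-1) (K-1) := by
  obtain ⟨M', rfl⟩ : ∃ M', M = M' + 2 := ⟨M - 2, by omega⟩
  obtain ⟨K', rfl⟩ : ∃ K', K = K' + 2 := ⟨K - 2, by omega⟩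
  set A := ∑ j ∈ Finset.range (K'+2), (M'+1).choose j with hA
  set B := ∑ j ∈ Finset.range (K'+1), M'.choose j with hB
  have hAB : A = 2 * B + M'.choose (K'+1) := by
    rw [hA, sum_choose_pascal M' (K'+1), Finset.sum_range_succ, hB]; ring
  have hid : M'.choose (K'+1) * (K'+1) = M'.choose K' * (M' - K') := Nat.choose_succ_right_eq M' K'
  have hCB : M'.choose K' ≤ B := by
    rw [hB]
    exact Finset.single_le_sum (f := fun j => M'.choose j) (fun _ _ => Nat.zero_le _)
      (Finset.self_mem_range_succ K')
  have key : (K'+2) * M'.choose (K'+1) ≤ 2 * (M' - K') * M'.choose K' := by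
    calc (K'+2) * M'.choose (K'+1) ≤ 2 * (K'+1) * M'.choose (K'+1) := by
          apply Nat.mul_le_mul_right; omega
    _ = 2 * (M'.choose (K'+1) * (K'+1)) := by ring
    _ = 2 * (M'.choose K' * (M' - K')) := by rw [hid]
    _ = 2 * (M' - K') * M'.choose K' := by ring
  have hKM' : K' ≤ M' := by omega
  have goal : (K'+2) * A ≤ 2 * (M'+2) * B := by
    rw [hAB]
    calc (K'+2) * (2 * B + M'.choose (K'+1))
        = 2 * (K'+2) * B + (K'+2) * M'.choose (K'+1) := by ring
    _ ≤ 2 * (K'+2) * B + 2 * (M' - K') * M'.choose K' := by omega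
    _ ≤ 2 * (K'+2) * B + 2 * (M' - K') * B := by
          have := Nat.mul_le_mul_left (2 * (M' - K')) hCB; omega
    _ = 2 * (K' + 2 + (M' - K')) * B := by ring
    _ ≤ 2 * (M'+2) * B := by
          apply Nat.mul_le_mul_right; omega
  show (K'+2) * (2 * A) ≤ 2 * (M'+2) * (2 * B)
  calc (K'+2) * (2*A) = 2 * ((K'+2) * A) := by ring
  _ ≤ 2 * (2 * (M'+2) * B) := by omega
  _ = 2 * (M'+2) * (2*B) := by ring




lemma pats_ncard_le_pow {V : Type} [AddCommGroup V] [Module ℝ V] {m : ℕ}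
    (f : Fin m → (V →ₗ[ℝ] ℝ)) : (pats f).ncard ≤ 2^m := by
  have h := Set.ncard_le_ncard (Set.subset_univ (pats f)) (Set.toFinite _)
  rwa [Set.ncard_univ, Nat.card_fun, Nat.card_eq_fintype_card (α := Bool),
    Nat.card_eq_fintype_card (α := Fin m), Fintype.card_bool, Fintype.card_fin] at h

lemma pats_card_le_two {V : Type} [AddCommGroup V] [Module ℝ V] [FiniteDimensional ℝ V] {m : ℕ}
    (hV : finrank ℝ V = 1) (f : Fin m → (V →ₗ[ℝ] ℝ)) : (pats f).ncard ≤ 2 := by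
  have : Nontrivial V := by
    apply Module.nontrivial_of_finrank_pos (R := ℝ); omega
  obtain ⟨v₀, hv₀⟩ := exists_ne (0 : V)
  have hspan : (ℝ ∙ v₀) = ⊤ := by
    apply Submodule.eq_top_of_finrank_eq
    rw [finrank_span_singleton hv₀, hV]
  have hsub : pats f ⊆ {fun i => decide (0 < f i v₀), fun i => decide (0 < f i (-v₀))} := by
    rintro z ⟨v, hv, hz⟩
    have : v ∈ (ℝ ∙ v₀) := hspan ▸ Submodule.mem_top
    obtain ⟨t, rfl⟩ := Submodule.mem_span_singleton.mp this
    have ht : t ≠ 0 := fun h => hv (by simp [h])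
    rcases ht.lt_or_gt with htneg | htpos
    · right
      funext i
      rw [Bool.eq_iff_iff, decide_eq_true_eq, hz i, map_smul, map_neg, smul_eq_mul]
      constructor
      · intro h; nlinarith
      · intro h; nlinarith
    · left
      funext i
      rw [Bool.eq_iff_iff, decide_eq_true_eq, hz i, map_smul, smul_eq_mul]
      constructor
      · intro h; nlinarith
      · intro h; nlinarith
  calc (pats f).ncard ≤ _ := Set.ncard_le_ncard hsub (Set.toFinite _)
  _ ≤ 2 := by
    apply le_trans (Set.ncard_insert_le _ _)
    simp





def GP {V : Type} [AddCommGroup V] [Module ℝ V] {m : ℕ} (k : ℕ)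
    (f : Fin m → (V →ₗ[ℝ] ℝ)) : Prop :=
  ∀ s : Finset (Fin m), s.card ≤ k → LinearIndependent ℝ (fun i : s => f i)

lemma exists_eps {m : ℕ} (a b : Fin m → ℝ) :
    ∃ ε : ℝ, 0 < ε ∧ ∀ j, (0 < a j → 0 < a j + ε * b j) ∧ (a j < 0 → a j + ε * b j < 0) := by
  classical
  set F := Finset.univ.filter (fun j : Fin m => a j ≠ 0) with hF
  have hbpos : ∀ j : Fin m, (0:ℝ) < |b j| + 1 := fun j => by positivity
  by_cases hne : F.Nonempty
  · set ε := min 1 (F.inf' hne (fun j => |a j| / (|b j| + 1))) with hε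
    have hεpos : 0 < ε := by
      apply lt_min one_pos
      rw [Finset.lt_inf'_iff]
      intro j hj
      have haj : a j ≠ 0 := (Finset.mem_filter.mp hj).2
      exact div_pos (abs_pos.mpr haj) (hbpos j)
    have key : ∀ j, a j ≠ 0 → |ε * b j| < |a j| := by
      intro j hj
      have hjF : j ∈ F := by simp [hF, hj]
      have h1 : ε ≤ |a j| / (|b j| + 1) :=
        le_trans (min_le_right _ _) (Finset.inf'_le _ hjF)
      have h2 : ε * (|b j| + 1) ≤ |a j| := by
        rw [← le_div_iff₀ (hbpos j)]
        exact h1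
      have habs : |ε * b j| = ε * |b j| := by rw [abs_mul, abs_of_pos hεpos]
      rw [habs]
      nlinarith [abs_nonneg (b j)]
    refine ⟨ε, hεpos, fun j => ⟨?_, ?_⟩⟩
    · intro h
      have hk := key j (ne_of_gt h)
      have h2 := (abs_lt.mp hk).1
      rw [abs_of_pos h] at h2
      linarith
    · intro h
      have hk := key j (ne_of_lt h)
      have h2 := (abs_lt.mp hk).2
      rw [abs_of_neg h] at h2
      linarith
  · refine ⟨1, one_pos, fun j => ⟨?_, ?_⟩⟩
    · intro h
      exfalso
      exact hne ⟨j, by simp [hF]; exact ne_of_gt h⟩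
    · intro h
      exfalso
      exact hne ⟨j, by simp [hF]; exact ne_of_lt h⟩

lemma eq_zero_of_forall_mem_ker {V : Type} [AddCommGroup V] [Module ℝ V] [FiniteDimensional ℝ V]
    {m k : ℕ} (hV : finrank ℝ V = k) {f : Fin m → (V →ₗ[ℝ] ℝ)}
    (hgp : GP k f) {s : Finset (Fin m)} (hcard : s.card = k)
    {v : V} (hv : ∀ i ∈ s, f i v = 0) : v = 0 := by
  classical
  have hind := hgp s hcard.le
  have hspan : Submodule.span ℝ (Set.range (fun i : s => f i)) = ⊤ := by
    apply hind.span_eq_top_of_card_eq_finrank'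
    rw [Fintype.card_coe, hcard, Subspace.dual_finrank_eq, hV]
  have hle : Submodule.span ℝ (Set.range (fun i : s => f i))
      ≤ LinearMap.ker (Module.Dual.eval ℝ V v) := by
    rw [Submodule.span_le]
    rintro φ ⟨i, rfl⟩
    exact LinearMap.mem_ker.mpr (hv i.val i.2)
  have hall : ∀ φ : Module.Dual ℝ V, φ v = 0 := by
    intro φ
    have hmem : φ ∈ LinearMap.ker (Module.Dual.eval ℝ V v) :=
      hle (hspan ▸ Submodule.mem_top)
    simpa using hmem
  exact (Module.forall_dual_apply_eq_zero_iff ℝ v).mp hall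

lemma exists_nonzero_witness {V : Type} [AddCommGroup V] [Module ℝ V] [FiniteDimensional ℝ V]
    {m k : ℕ} (hV : finrank ℝ V = k) (f : Fin m → (V →ₗ[ℝ] ℝ)) (hgp : GP k f)
    {z : Fin m → Bool} (hz : z ∈ pats f) :
    ∃ v : V, v ≠ 0 ∧ (∀ i, (z i = true ↔ 0 < f i v)) ∧ ∀ i, f i v ≠ 0 := by
  classical
  suffices H : ∀ t : ℕ, ∀ v : V, v ≠ 0 → (∀ i, (z i = true ↔ 0 < f i v)) →
      (Finset.univ.filter (fun i => f i v = 0)).card ≤ t →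
      ∃ v' : V, v' ≠ 0 ∧ (∀ i, (z i = true ↔ 0 < f i v')) ∧ ∀ i, f i v' ≠ 0 by
    obtain ⟨v, hv0, hv⟩ := hz
    exact H _ v hv0 hv le_rfl
  intro t
  induction t with
  | zero =>
    intro v hv0 hv hcard
    refine ⟨v, hv0, hv, fun i => ?_⟩
    intro hzero
    have : i ∈ Finset.univ.filter (fun i => f i v = 0) := by
      simp [hzero]
    rw [Finset.card_eq_zero.mp (Nat.le_zero.mp hcard)] at this
    exact absurd this (Finset.notMem_empty i)
  | succ t iht =>
    intro v hv0 hv hcard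
    set Z := Finset.univ.filter (fun i => f i v = 0) with hZdef
    by_cases hZe : Z = ∅
    · refine ⟨v, hv0, hv, fun i => ?_⟩
      intro hzero
      have : i ∈ Z := by simp [hZdef, hzero]
      rw [hZe] at this
      exact absurd this (Finset.notMem_empty i)
    · obtain ⟨j₀, hj₀Z⟩ := Finset.nonempty_iff_ne_empty.mpr hZe
      have hj₀v : f j₀ v = 0 := (Finset.mem_filter.mp hj₀Z).2
      have hZk : Z.card < k := by
        by_contra hge
        push_neg at hge
        obtain ⟨s, hs, hscard⟩ := Finset.exists_subset_card_eq (s := Z) (n := k) hge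
        exact hv0 (eq_zero_of_forall_mem_ker hV hgp hscard
          (fun i hi => (Finset.mem_filter.mp (hs hi)).2))
      have hind : LinearIndependent ℝ (fun i : Z => f i) := hgp Z hZk.le
      have himg : (fun i : Z => f i) '' {i : Z | i.val ≠ j₀}
          = Set.range (fun i : (Z.erase j₀ : Finset (Fin m)) => f i) := by
        ext φ
        constructor
        · rintro ⟨⟨i, hiZ⟩, hine, rfl⟩
          exact ⟨⟨i, Finset.mem_erase.mpr ⟨hine, hiZ⟩⟩, rfl⟩
        · rintro ⟨⟨i, hie⟩, rfl⟩
          obtain ⟨hne, hiZ⟩ := Finset.mem_erase.mp hie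
          exact ⟨⟨i, hiZ⟩, hne, rfl⟩
      have hnot : f j₀ ∉ Submodule.span ℝ
          (Set.range (fun i : (Z.erase j₀ : Finset (Fin m)) => f i)) := by
        rw [← himg]
        exact hind.notMem_span_image (x := ⟨j₀, hj₀Z⟩) (by simp)
      have hker : ¬ ((⨅ i : (Z.erase j₀ : Finset (Fin m)), LinearMap.ker (f i.val))
          ≤ LinearMap.ker (f j₀)) :=
        fun hle => hnot (mem_span_of_iInf_ker_le_ker hle)
      obtain ⟨d, hdmem, hdnot⟩ := SetLike.not_le_iff_exists.mp hker
      have hdz : ∀ i ∈ Z.erase j₀, f i d = 0 := by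
        intro i hi
        have := (Submodule.mem_iInf _).mp hdmem ⟨i, hi⟩
        exact LinearMap.mem_ker.mp this
      have hdj₀ : f j₀ d ≠ 0 := fun h => hdnot (LinearMap.mem_ker.mpr h)
      clear hker hdmem hdnot hnot himg hind
      obtain ⟨e, hez, hej⟩ : ∃ e : V, (∀ i ∈ Z.erase j₀, f i e = 0) ∧ f j₀ e < 0 := by
        rcases lt_or_gt_of_ne hdj₀ with h | h
        · exact ⟨d, hdz, h⟩
        · exact ⟨-d, fun i hi => by rw [map_neg, hdz i hi, neg_zero],
            by rw [map_neg]; linarith⟩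
      obtain ⟨ε, hε, hεp⟩ := exists_eps (fun i => f i v) (fun i => f i e)
      set v' := v + ε • e with hv'def
      have hv'app : ∀ i, f i v' = f i v + ε * f i e := fun i => by
        rw [hv'def, map_add, map_smul, smul_eq_mul]
      have hv'j₀ : f j₀ v' < 0 := by
        rw [hv'app, hj₀v, zero_add]
        exact mul_neg_of_pos_of_neg hε hej
      have hv'ne : v' ≠ 0 := fun h => by
        rw [h, map_zero] at hv'j₀; exact lt_irrefl 0 hv'j₀
      have hsign : ∀ i, (z i = true ↔ 0 < f i v') := by
        intro i
        by_cases hiZ : f i v = 0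
        · have hzfalse : z i ≠ true := fun ht => by
            have := (hv i).mp ht
            rw [hiZ] at this
            exact lt_irrefl 0 this
          have hle0 : f i v' ≤ 0 := by
            by_cases hij : i = j₀
            · subst hij; linarith [hv'j₀]
            · have hie : i ∈ Z.erase j₀ :=
                Finset.mem_erase.mpr ⟨hij, by simp [hZdef, hiZ]⟩
              rw [hv'app, hiZ, hez i hie, zero_add, mul_zero]
          exact iff_of_false hzfalse (not_lt.mpr hle0)
        · rcases lt_or_gt_of_ne hiZ with hneg | hpos
          · have hlt := (hεp i).2 hneg
            refine iff_of_false (fun ht => ?_) (not_lt.mpr (by rw [hv'app]; linarith))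
            have := (hv i).mp ht
            linarith
          · have hgt := (hεp i).1 hpos
            exact iff_of_true ((hv i).mpr hpos) (by rw [hv'app]; linarith)
      have hsubset : Finset.univ.filter (fun i => f i v' = 0) ⊆ Z.erase j₀ := by
        intro i hi
        have hzero : f i v' = 0 := (Finset.mem_filter.mp hi).2
        by_cases hiZ : f i v = 0
        · refine Finset.mem_erase.mpr ⟨?_, by simp [hZdef, hiZ]⟩
          intro hij
          subst hij
          rw [hzero] at hv'j₀
          exact lt_irrefl 0 hv'j₀
        · exfalso
          rcases lt_or_gt_of_ne hiZ with hneg | hpos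
          · have := (hεp i).2 hneg
            rw [hv'app] at hzero
            linarith
          · have := (hεp i).1 hpos
            rw [hv'app] at hzero
            linarith
      have hcard' : (Finset.univ.filter (fun i => f i v' = 0)).card ≤ t := by
        have h1 := Finset.card_le_card hsubset
        have h2 : (Z.erase j₀).card = Z.card - 1 := Finset.card_erase_of_mem hj₀Z
        have h3 : 1 ≤ Z.card := Finset.card_pos.mpr ⟨j₀, hj₀Z⟩
        omega
      exact iht v' hv'ne hsign hcard'





lemma cB_one_left {k : ℕ} (hk : 1 ≤ k) : cB 1 k = 2 := by
  unfold cB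
  have : ∑ j ∈ Finset.range k, (0).choose j = 1 := by
    rw [Finset.sum_eq_single_of_mem 0 (Finset.mem_range.mpr (by omega))]
    · rfl
    · intro j _ hj
      exact Nat.choose_eq_zero_of_lt (by omega)
  simp [this]

lemma finrank_ker_functional {V : Type} [AddCommGroup V] [Module ℝ V] [FiniteDimensional ℝ V]
    {k : ℕ} (hV : finrank ℝ V = k) {φ : V →ₗ[ℝ] ℝ} (hφ : φ ≠ 0) :
    finrank ℝ ↥(LinearMap.ker φ) = k - 1 := by
  have hrange : LinearMap.range φ = ⊤ := by
    rw [LinearMap.range_eq_top]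
    intro c
    obtain ⟨v, hv⟩ := DFunLike.ne_iff.mp hφ
    simp only [LinearMap.zero_apply] at hv
    exact ⟨(c / φ v) • v, by rw [map_smul, smul_eq_mul]; field_simp⟩
  have h2 := LinearMap.finrank_range_add_finrank_ker φ
  rw [hrange, finrank_top, Module.finrank_self, hV] at h2
  omega

lemma GP_castSucc {V : Type} [AddCommGroup V] [Module ℝ V] {n k : ℕ}
    {f : Fin (n+1) → (V →ₗ[ℝ] ℝ)} (hgp : GP k f) :
    GP k (fun j : Fin n => f j.castSucc) := by
  classical
  intro s hs
  have hinj : Function.Injective (Fin.castSucc : Fin n → Fin (n+1)) := Fin.castSucc_injective n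
  have hcard : (s.image Fin.castSucc).card ≤ k := by
    rw [Finset.card_image_of_injective _ hinj]; exact hs
  have hind := hgp _ hcard
  exact hind.comp (fun i : s => (⟨i.val.castSucc, Finset.mem_image_of_mem _ i.2⟩ :
      (s.image Fin.castSucc : Finset (Fin (n+1))))) (fun i j hij => by
    apply Subtype.ext
    exact hinj (congrArg Subtype.val hij))

lemma GP_ker {V : Type} [AddCommGroup V] [Module ℝ V] [FiniteDimensional ℝ V] {n k : ℕ}
    {f : Fin (n+1) → (V →ₗ[ℝ] ℝ)} (hk : 1 ≤ k) (hgp : GP k f) :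
    GP (k-1) (fun j : Fin n => (f j.castSucc).comp
      (LinearMap.ker (f (Fin.last n))).subtype) := by
  classical
  intro s hs
  rw [Fintype.linearIndependent_iff]
  intro c hc
  set cc : Fin n → ℝ := fun j => if h : j ∈ s then c ⟨j, h⟩ else 0 with hcc
  have hccs : ∀ i : s, cc i.val = c i := fun i => by rw [hcc]; exact dif_pos i.2
  set H : V →ₗ[ℝ] ℝ := ∑ j ∈ s, cc j • f j.castSucc with hH
  have hHker : LinearMap.ker (f (Fin.last n)) ≤ LinearMap.ker H := by
    intro x hx
    rw [LinearMap.mem_ker]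
    have hcx := congrArg
      (fun (L : ↥(LinearMap.ker (f (Fin.last n))) →ₗ[ℝ] ℝ) => L ⟨x, hx⟩) hc
    simp only [LinearMap.coe_sum, Finset.sum_apply, LinearMap.smul_apply,
      LinearMap.zero_apply, LinearMap.coe_comp, Function.comp_apply,
      Submodule.coe_subtype, smul_eq_mul] at hcx
    rw [hH]
    simp only [LinearMap.coe_sum, Finset.sum_apply, LinearMap.smul_apply, smul_eq_mul]
    rw [← Finset.sum_coe_sort s (fun j => cc j * f (Fin.castSucc j) x)]
    calc ∑ i : s, cc i.val * f (Fin.castSucc i.val) x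
        = ∑ i : s, c i * f (Fin.castSucc i.val) x := by
          apply Finset.sum_congr rfl
          intro i _
          rw [hccs i]
    _ = 0 := hcx
  have hflne : f (Fin.last n) ≠ 0 := by
    have hind := hgp {Fin.last n} (by rw [Finset.card_singleton]; omega)
    have := hind.ne_zero ⟨Fin.last n, Finset.mem_singleton_self _⟩
    simpa using this
  have hspan : H ∈ Submodule.span ℝ (Set.range (fun _ : Unit => f (Fin.last n))) := by
    apply mem_span_of_iInf_ker_le_ker (L := fun _ : Unit => f (Fin.last n))
    rw [iInf_const]
    exact hHker
  rw [Set.range_const, Submodule.mem_span_singleton] at hspan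
  obtain ⟨μ, hμ⟩ := hspan
  set s' : Finset (Fin (n+1)) := insert (Fin.last n) (s.image Fin.castSucc) with hs'
  have hlastnotin : Fin.last n ∉ s.image Fin.castSucc := by
    simp only [Finset.mem_image, not_exists]
    rintro j ⟨hj, hjeq⟩
    exact absurd hjeq (Fin.castSucc_lt_last j).ne
  have hs'card : s'.card ≤ k := by
    rw [hs', Finset.card_insert_of_notMem hlastnotin,
      Finset.card_image_of_injective _ (Fin.castSucc_injective n)]
    omega
  have hind := hgp s' hs'card
  rw [Fintype.linearIndependent_iff] at hind
  set CC : Fin (n+1) → ℝ := fun i => if i = Fin.last n then -μ else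
    (if h : ∃ j : Fin n, j.castSucc = i then cc h.choose else 0) with hCC
  have h3 : ∀ j : Fin n, CC j.castSucc = cc j := by
    intro j
    rw [hCC]
    simp only
    rw [if_neg (Fin.castSucc_lt_last j).ne]
    have hex : ∃ j' : Fin n, j'.castSucc = j.castSucc := ⟨j, rfl⟩
    rw [dif_pos hex]
    have : hex.choose = j := Fin.castSucc_injective n hex.choose_spec
    rw [this]
  have hCCsum : ∑ i : s', (fun i : s' => CC i.val) i • f i.val = 0 := by
    rw [Finset.sum_coe_sort s' (fun i => CC i • f i), hs',
      Finset.sum_insert hlastnotin]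
    have h1 : CC (Fin.last n) = -μ := by rw [hCC]; simp
    have h2 : ∑ i ∈ s.image Fin.castSucc, CC i • f i
        = ∑ j ∈ s, CC j.castSucc • f j.castSucc := by
      apply Finset.sum_image
      intro x _ y _ hxy
      exact Fin.castSucc_injective n hxy
    rw [h1, h2]
    calc -μ • f (Fin.last n) + ∑ j ∈ s, CC j.castSucc • f j.castSucc
        = -μ • f (Fin.last n) + ∑ j ∈ s, cc j • f j.castSucc := by
          congr 1
          apply Finset.sum_congr rfl
          intro j _
          rw [h3 j]
    _ = -μ • f (Fin.last n) + H := by rw [hH]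
    _ = 0 := by rw [← hμ, ← add_smul, neg_add_cancel, zero_smul]
  have hCC0 := hind (fun i => CC i.val) hCCsum
  intro i
  have hmem : i.val.castSucc ∈ s' := by
    rw [hs']
    exact Finset.mem_insert_of_mem (Finset.mem_image_of_mem _ i.2)
  have := hCC0 ⟨i.val.castSucc, hmem⟩
  simp only at this
  rw [h3 i.val, hccs i] at this
  exact this

lemma two_le_pats_ncard {V : Type} [AddCommGroup V] [Module ℝ V] {m : ℕ}
    (f : Fin m → (V →ₗ[ℝ] ℝ)) {i₀ : Fin m} (hne : f i₀ ≠ 0) : 2 ≤ (pats f).ncard := by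
  obtain ⟨v, hv⟩ := DFunLike.ne_iff.mp hne
  simp only [LinearMap.zero_apply] at hv
  obtain ⟨w, hw⟩ : ∃ w : V, 0 < f i₀ w := by
    rcases lt_or_gt_of_ne hv with h | h
    · exact ⟨-v, by rw [map_neg]; linarith⟩
    · exact ⟨v, h⟩
  have hw0 : w ≠ 0 := fun h => by rw [h, map_zero] at hw; exact lt_irrefl 0 hw
  set z1 : Fin m → Bool := fun i => decide (0 < f i w) with hz1
  set z2 : Fin m → Bool := fun i => decide (0 < f i (-w)) with hz2
  have h1 : z1 ∈ pats f := ⟨w, hw0, fun i => by simp [hz1]⟩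
  have h2 : z2 ∈ pats f := ⟨-w, by simpa using hw0, fun i => by simp [hz2]⟩
  have hne12 : z1 ≠ z2 := by
    intro h
    have hfun := congrFun h i₀
    rw [hz1, hz2] at hfun
    simp only [map_neg, decide_eq_decide] at hfun
    have := hfun.mp hw
    linarith
  calc 2 = ({z1, z2} : Set (Fin m → Bool)).ncard := (Set.ncard_pair hne12).symm
  _ ≤ (pats f).ncard := by
    apply Set.ncard_le_ncard _ (Set.toFinite _)
    rintro z (rfl | rfl)
    · exact h1
    · exact h2

lemma pats_split {V : Type} [AddCommGroup V] [Module ℝ V] {n : ℕ}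
    (f : Fin (n+1) → (V →ₗ[ℝ] ℝ)) :
    (pats f).ncard = {z' : Fin n → Bool | Fin.snoc z' true ∈ pats f}.ncard
      + {z' : Fin n → Bool | Fin.snoc z' false ∈ pats f}.ncard := by
  classical
  set PT := {z' : Fin n → Bool | Fin.snoc z' true ∈ pats f} with hPT
  set PF := {z' : Fin n → Bool | Fin.snoc z' false ∈ pats f} with hPF
  have himgs : pats f =
      (fun z' : Fin n → Bool => (Fin.snoc z' true : Fin (n+1) → Bool)) '' PT ∪
      (fun z' : Fin n → Bool => (Fin.snoc z' false : Fin (n+1) → Bool)) '' PF := by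
    ext z
    constructor
    · intro hz
      rcases Bool.eq_false_or_eq_true (z (Fin.last n)) with h | h
      · left
        refine ⟨Fin.init z, ?_, ?_⟩
        · show Fin.snoc (Fin.init z) true ∈ pats f
          rw [← h, Fin.snoc_init_self]
          exact hz
        · show Fin.snoc (Fin.init z) true = z
          rw [← h, Fin.snoc_init_self]
      · right
        refine ⟨Fin.init z, ?_, ?_⟩
        · show Fin.snoc (Fin.init z) false ∈ pats f
          rw [← h, Fin.snoc_init_self]
          exact hz
        · show Fin.snoc (Fin.init z) false = z
          rw [← h, Fin.snoc_init_self]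
    · rintro (⟨z', hz', rfl⟩ | ⟨z', hz', rfl⟩) <;> exact hz'
  have hdisj : Disjoint
      ((fun z' : Fin n → Bool => (Fin.snoc z' true : Fin (n+1) → Bool)) '' PT)
      ((fun z' : Fin n → Bool => (Fin.snoc z' false : Fin (n+1) → Bool)) '' PF) := by
    rw [Set.disjoint_left]
    rintro z ⟨z1, _, rfl⟩ ⟨z2, _, hz2⟩
    have := congrFun hz2 (Fin.last n)
    simp only [Fin.snoc_last] at this
    exact Bool.false_ne_true this
  have hsnocinj : ∀ b : Bool, Function.Injective
      (fun z' : Fin n → Bool => (Fin.snoc z' b : Fin (n+1) → Bool)) := by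
    intro b z1 z2 h
    simp only at h
    have := congrArg Fin.init h
    rwa [Fin.init_snoc, Fin.init_snoc] at this
  rw [himgs, Set.ncard_union_eq hdisj (Set.toFinite _) (Set.toFinite _),
    Set.ncard_image_of_injective _ (hsnocinj true),
    Set.ncard_image_of_injective _ (hsnocinj false)]

lemma pats_card_ge :
    ∀ (m : ℕ) (k : ℕ), 1 ≤ m → 1 ≤ k →
      ∀ (V : Type) [AddCommGroup V] [Module ℝ V] [FiniteDimensional ℝ V],
      finrank ℝ V = k → ∀ f : Fin m → (V →ₗ[ℝ] ℝ), GP k f → cB m k ≤ (pats f).ncard := by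
  intro m
  induction m with
  | zero => intro k hm; omega
  | succ n ih =>
    intro k hm hk V _ _ _ hV f hgp
    have hfne : ∀ i : Fin (n+1), f i ≠ 0 := by
      intro i
      have hind := hgp {i} (by rw [Finset.card_singleton]; omega)
      have := hind.ne_zero ⟨i, Finset.mem_singleton_self i⟩
      simpa using this
    rcases Nat.eq_zero_or_pos n with hn0 | hn0
    · subst hn0
      rw [cB_one_left hk]
      exact two_le_pats_ncard f (hfne 0)
    rcases eq_or_lt_of_le hk with hk1 | hk2
    · rw [← hk1, cB_one]
      exact two_le_pats_ncard f (hfne 0)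
    obtain ⟨k', rfl⟩ : ∃ k', k = k' + 2 := ⟨k - 2, by omega⟩
    set f' : Fin n → (V →ₗ[ℝ] ℝ) := fun j => f j.castSucc with hf'
    set N := LinearMap.ker (f (Fin.last n)) with hNdef
    have hN : finrank ℝ ↥N = k' + 1 := by
      have := finrank_ker_functional hV (hfne (Fin.last n))
      rw [← hNdef] at this
      omega
    set g : Fin n → (↥N →ₗ[ℝ] ℝ) := fun j => (f j.castSucc).comp N.subtype with hg
    have hgpf' : GP (k'+2) f' := GP_castSucc hgp
    have hgpg : GP (k'+1) g := by
      have := GP_ker (k := k'+2) (by omega) hgp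
      simpa using this
    have hIH1 : cB n (k'+2) ≤ (pats f').ncard := ih (k'+2) hn0 (by omega) V hV f' hgpf'
    have hIH2 : cB n (k'+1) ≤ (pats g).ncard := ih (k'+1) hn0 (by omega) ↥N hN g hgpg
    set PT := {z' : Fin n → Bool | Fin.snoc z' true ∈ pats f} with hPT
    set PF := {z' : Fin n → Bool | Fin.snoc z' false ∈ pats f} with hPF
    have hcount : (pats f).ncard = PT.ncard + PF.ncard := pats_split f
    have hsub1 : pats f' ⊆ PT ∪ PF := by
      rintro z' ⟨v, hv0, hv⟩
      rcases le_or_gt (f (Fin.last n) v) 0 with h | h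
      · right
        refine ⟨v, hv0, fun i => ?_⟩
        refine Fin.lastCases ?_ (fun j => ?_) i
        · rw [Fin.snoc_last]
          exact iff_of_false (by simp) (not_lt.mpr h)
        · rw [Fin.snoc_castSucc]
          exact hv j
      · left
        refine ⟨v, hv0, fun i => ?_⟩
        refine Fin.lastCases ?_ (fun j => ?_) i
        · rw [Fin.snoc_last]
          exact iff_of_true rfl h
        · rw [Fin.snoc_castSucc]
          exact hv j
    have hsub2 : pats g ⊆ PT ∩ PF := by
      rintro z'' hz''
      obtain ⟨w, hw0, hwz, hwnz⟩ := exists_nonzero_witness hN g hgpg hz''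
      have hwker : f (Fin.last n) w.val = 0 := LinearMap.mem_ker.mp w.2
      have hwval : w.val ≠ 0 := fun hw => hw0 (Subtype.ext hw)
      obtain ⟨d, hd⟩ : ∃ d : V, 0 < f (Fin.last n) d := by
        obtain ⟨v, hv⟩ := DFunLike.ne_iff.mp (hfne (Fin.last n))
        simp only [LinearMap.zero_apply] at hv
        rcases lt_or_gt_of_ne hv with h | h
        · exact ⟨-v, by rw [map_neg]; linarith⟩
        · exact ⟨v, h⟩
      have hgval : ∀ j : Fin n, g j w = f j.castSucc w.val := fun j => rfl
      constructor
      · obtain ⟨ε, hε, hεp⟩ := exists_eps (fun i => f i w.val) (fun i => f i d)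
        have happ : ∀ i : Fin (n+1), f i (w.val + ε • d) = f i w.val + ε * f i d :=
          fun i => by rw [map_add, map_smul, smul_eq_mul]
        have hlast : 0 < f (Fin.last n) (w.val + ε • d) := by
          rw [happ, hwker, zero_add]
          exact mul_pos hε hd
        refine ⟨w.val + ε • d, fun hzz => by rw [hzz, map_zero] at hlast; exact lt_irrefl 0 hlast,
          fun i => ?_⟩
        refine Fin.lastCases ?_ (fun j => ?_) i
        · rw [Fin.snoc_last]
          exact iff_of_true rfl hlast
        · rw [Fin.snoc_castSucc]
          have hnz := hwnz j
          rw [hgval j] at hnz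
          rcases lt_or_gt_of_ne hnz with hneg | hpos
          · have := (hεp j.castSucc).2 hneg
            refine iff_of_false (fun ht => ?_) (not_lt.mpr (by rw [happ]; linarith))
            have := (hwz j).mp ht
            rw [hgval j] at this
            linarith
          · have := (hεp j.castSucc).1 hpos
            refine iff_of_true ?_ (by rw [happ]; linarith)
            apply (hwz j).mpr
            rw [hgval j]
            exact hpos
      · obtain ⟨ε, hε, hεp⟩ := exists_eps (fun i => f i w.val) (fun i => -(f i d))
        have happ : ∀ i : Fin (n+1), f i (w.val - ε • d) = f i w.val + ε * (-(f i d)) :=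
          fun i => by rw [map_sub, map_smul, smul_eq_mul]; ring
        have hlast : f (Fin.last n) (w.val - ε • d) < 0 := by
          rw [happ, hwker, zero_add]
          nlinarith
        refine ⟨w.val - ε • d, fun hzz => by rw [hzz, map_zero] at hlast; exact lt_irrefl 0 hlast,
          fun i => ?_⟩
        refine Fin.lastCases ?_ (fun j => ?_) i
        · rw [Fin.snoc_last]
          exact iff_of_false (by simp) (not_lt.mpr (le_of_lt hlast))
        · rw [Fin.snoc_castSucc]
          have hnz := hwnz j
          rw [hgval j] at hnz
          rcases lt_or_gt_of_ne hnz with hneg | hpos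
          · have := (hεp j.castSucc).2 hneg
            refine iff_of_false (fun ht => ?_) (not_lt.mpr (by rw [happ]; linarith))
            have := (hwz j).mp ht
            rw [hgval j] at this
            linarith
          · have := (hεp j.castSucc).1 hpos
            refine iff_of_true ?_ (by rw [happ]; linarith)
            apply (hwz j).mpr
            rw [hgval j]
            exact hpos
    have h1 := Set.ncard_union_add_ncard_inter PT PF (Set.toFinite _) (Set.toFinite _)
    have h2 : (pats f').ncard ≤ (PT ∪ PF).ncard :=
      Set.ncard_le_ncard hsub1 (Set.toFinite _)
    have h3 : (pats g).ncard ≤ (PT ∩ PF).ncard :=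
      Set.ncard_le_ncard hsub2 (Set.toFinite _)
    have hpasc : cB (n+1) (k'+2) = cB n (k'+2) + cB n (k'+1) :=
      cB_pascal n (k'+1) (by omega)
    omega




lemma pats_empty {V : Type} [AddCommGroup V] [Module ℝ V] [FiniteDimensional ℝ V] {m : ℕ}
    (hV : finrank ℝ V = 0) (f : Fin m → (V →ₗ[ℝ] ℝ)) : pats f = ∅ := by
  have hs : Subsingleton V := by
    rw [← Module.finrank_zero_iff (R := ℝ)]; exact hV
  ext z
  simp only [pats, mem_setOf_eq, mem_empty_iff_false, iff_false, not_exists]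
  intro v hv
  exact absurd (Subsingleton.elim v 0) hv.1

lemma pats_card_le :
    ∀ (m k : ℕ) (V : Type) [AddCommGroup V] [Module ℝ V] [FiniteDimensional ℝ V],
      finrank ℝ V = k → ∀ f : Fin m → (V →ₗ[ℝ] ℝ), (pats f).ncard ≤ cB m k := by
  intro m
  induction m with
  | zero =>
    intro k V _ _ _ hV f
    rcases Nat.eq_zero_or_pos k with hk | hk
    · subst hk; rw [pats_empty hV f]; simp
    · have h1 := pats_ncard_le_pow f
      have h2 := two_pow_le_cB 0 k (by omega) hk
      omega
  | succ n ih =>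
    intro k V _ _ _ hV f
    rcases Nat.eq_zero_or_pos k with hk | hk
    · subst hk; rw [pats_empty hV f]; simp
    by_cases hmk : n + 1 ≤ k
    · have h1 := pats_ncard_le_pow f
      have h2 := two_pow_le_cB (n+1) k hmk hk
      omega
    push_neg at hmk
    rcases eq_or_lt_of_le (show 1 ≤ k from hk) with hk1 | hk2
    · have hV1 : finrank ℝ V = 1 := by omega
      rw [← hk1, cB_one]
      exact pats_card_le_two hV1 f
    -- main case : 2 ≤ k ≤ n
    obtain ⟨k', rfl⟩ : ∃ k', k = k' + 2 := ⟨k - 2, by omega⟩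
    have hkn : k' + 2 ≤ n := by omega
    set f' : Fin n → (V →ₗ[ℝ] ℝ) := fun j => f j.castSucc with hf'
    have hP' : (pats f').ncard ≤ cB n (k'+2) := ih _ V hV f'
    by_cases hfl : f (Fin.last n) = 0
    · -- degenerate last functional
      have hlastf : ∀ z ∈ pats f, z (Fin.last n) = false := by
        rintro z ⟨v, hv0, hz⟩
        have := hz (Fin.last n)
        rw [hfl] at this
        simpa using this
      have hself : ∀ z ∈ pats f, Fin.snoc (Fin.init z) false = z := by
        intro z hz
        rw [← hlastf z hz, Fin.snoc_init_self]
      have hinj : Set.InjOn (fun z : Fin (n+1) → Bool => Fin.init z) (pats f) := by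
        intro z1 h1 z2 h2 h
        rw [← hself z1 h1, ← hself z2 h2]
        simp only at h
        rw [h]
      have hsub : (fun z : Fin (n+1) → Bool => Fin.init z) '' pats f ⊆ pats f' := by
        rintro _ ⟨z, ⟨v, hv0, hz⟩, rfl⟩
        exact ⟨v, hv0, fun j => hz j.castSucc⟩
      calc (pats f).ncard = ((fun z : Fin (n+1) → Bool => Fin.init z) '' pats f).ncard :=
            (Set.ncard_image_of_injOn hinj).symm
      _ ≤ (pats f').ncard := Set.ncard_le_ncard hsub (Set.toFinite _)
      _ ≤ cB n (k'+2) := hP'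
      _ ≤ cB (n+1) (k'+2) := cB_mono_m _ _
    · -- f last ≠ 0
      set N := LinearMap.ker (f (Fin.last n)) with hNdef
      have hrange : LinearMap.range (f (Fin.last n)) = ⊤ := by
        rw [LinearMap.range_eq_top]
        intro c
        obtain ⟨v, hv⟩ := DFunLike.ne_iff.mp hfl
        simp only [LinearMap.zero_apply] at hv
        exact ⟨(c / f (Fin.last n) v) • v, by rw [map_smul, smul_eq_mul]; field_simp⟩
      have hN : finrank ℝ ↥N = k' + 1 := by
        have h2 := LinearMap.finrank_range_add_finrank_ker (f (Fin.last n))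
        rw [hrange, finrank_top, Module.finrank_self, hV, ← hNdef] at h2
        omega
      set g : Fin n → (↥N →ₗ[ℝ] ℝ) := fun j => (f j.castSucc).comp N.subtype with hg
      have hgapp : ∀ (j : Fin n) (x : ↥N), g j x = f j.castSucc x.val := by
        intro j x
        simp [hg]
      have hQ : (pats g).ncard ≤ cB n (k'+1) := ih _ ↥N hN g
      set PT := {z' : Fin n → Bool | Fin.snoc z' true ∈ pats f} with hPT
      set PF := {z' : Fin n → Bool | Fin.snoc z' false ∈ pats f} with hPF
      have himgs : pats f =
          (fun z' : Fin n → Bool => (Fin.snoc z' true : Fin (n+1) → Bool)) '' PT ∪ (fun z' : Fin n → Bool => (Fin.snoc z' false : Fin (n+1) → Bool)) '' PF := by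
        ext z
        constructor
        · intro hz
          rcases Bool.eq_false_or_eq_true (z (Fin.last n)) with h | h
          · left
            refine ⟨Fin.init z, ?_, ?_⟩
            · show Fin.snoc (Fin.init z) true ∈ pats f
              rw [← h, Fin.snoc_init_self]
              exact hz
            · show Fin.snoc (Fin.init z) true = z
              rw [← h, Fin.snoc_init_self]
          · right
            refine ⟨Fin.init z, ?_, ?_⟩
            · show Fin.snoc (Fin.init z) false ∈ pats f
              rw [← h, Fin.snoc_init_self]
              exact hz
            · show Fin.snoc (Fin.init z) false = z
              rw [← h, Fin.snoc_init_self]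
        · rintro (⟨z', hz', rfl⟩ | ⟨z', hz', rfl⟩) <;> exact hz'
      have hdisj : Disjoint ((fun z' : Fin n → Bool => (Fin.snoc z' true : Fin (n+1) → Bool)) '' PT)
          ((fun z' : Fin n → Bool => (Fin.snoc z' false : Fin (n+1) → Bool)) '' PF) := by
        rw [Set.disjoint_left]
        rintro z ⟨z1, _, rfl⟩ ⟨z2, _, hz2⟩
        have := congrFun hz2 (Fin.last n)
        simp only [Fin.snoc_last] at this
        exact Bool.false_ne_true this
      have hsnocinj : ∀ b : Bool, Function.Injective
          (fun z' : Fin n → Bool => (Fin.snoc z' b : Fin (n+1) → Bool)) := by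
        intro b z1 z2 h
        simp only at h
        have := congrArg Fin.init h
        rwa [Fin.init_snoc, Fin.init_snoc] at this
      have hcount : (pats f).ncard = PT.ncard + PF.ncard := by
        rw [himgs, Set.ncard_union_eq hdisj (Set.toFinite _) (Set.toFinite _),
          Set.ncard_image_of_injective _ (hsnocinj true),
          Set.ncard_image_of_injective _ (hsnocinj false)]
      have hsubP' : PT ∪ PF ⊆ pats f' := by
        rintro z' (hz' | hz')
        · obtain ⟨v, hv0, hv⟩ := hz'
          exact ⟨v, hv0, fun j => by
            have := hv j.castSucc; rwa [Fin.snoc_castSucc] at this⟩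
        · obtain ⟨v, hv0, hv⟩ := hz'
          exact ⟨v, hv0, fun j => by
            have := hv j.castSucc; rwa [Fin.snoc_castSucc] at this⟩
      have hkey : (pats f).ncard ≤ (pats f').ncard + (PT ∩ PF).ncard := by
        have h1 := Set.ncard_union_add_ncard_inter PT PF (Set.toFinite _) (Set.toFinite _)
        have h2 : (PT ∪ PF).ncard ≤ (pats f').ncard :=
          Set.ncard_le_ncard hsubP' (Set.toFinite _)
        omega
      have hD : (PT ∩ PF) ⊆ pats g ∪ {fun _ => false} := by
        rintro z' ⟨hzT, hzF⟩
        by_cases hall : z' = fun _ => false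
        · right; exact hall
        · left
          obtain ⟨vp, hvp0, hvp⟩ := hzT
          obtain ⟨vm, hvm0, hvm⟩ := hzF
          have hvpl : 0 < f (Fin.last n) vp := by
            have := hvp (Fin.last n); simpa [Fin.snoc_last] using this
          have hvml : f (Fin.last n) vm ≤ 0 := by
            have := hvm (Fin.last n); simp [Fin.snoc_last] at this
            exact this
          have hvpc : ∀ j : Fin n, z' j = true ↔ 0 < f j.castSucc vp := by
            intro j; have := hvp j.castSucc; rwa [Fin.snoc_castSucc] at this
          have hvmc : ∀ j : Fin n, z' j = true ↔ 0 < f j.castSucc vm := by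
            intro j; have := hvm j.castSucc; rwa [Fin.snoc_castSucc] at this
          obtain ⟨j₀, hj₀⟩ : ∃ j₀, z' j₀ = true := by
            by_contra hc
            push_neg at hc
            exact hall (funext fun j => by
              rcases Bool.eq_false_or_eq_true (z' j) with h | h
              · exact absurd h (hc j)
              · exact h)
          rcases eq_or_lt_of_le hvml with heq | hneg
          · refine ⟨⟨vm, by rw [hNdef]; exact LinearMap.mem_ker.mpr heq⟩, ?_, ?_⟩
            · intro h
              rw [Submodule.mk_eq_zero] at h
              exact hvm0 h
            · intro j
              rw [hgapp]
              exact hvmc j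
          · set a := f (Fin.last n) vp with ha
            set b := -(f (Fin.last n) vm) with hb
            have hapos : 0 < a := hvpl
            have hbpos : 0 < b := by rw [hb]; linarith
            set w := b • vp + a • vm with hw
            have hwexp : ∀ j : Fin (n+1), f j w = b * f j vp + a * f j vm := by
              intro j
              rw [hw, map_add, map_smul, map_smul, smul_eq_mul, smul_eq_mul]
            have hwlst : f (Fin.last n) w = 0 := by
              rw [hwexp, ha, hb]; ring
            have hwc : ∀ j : Fin n, z' j = true ↔ 0 < f j.castSucc w := by
              intro j
              rw [hwexp]
              constructor
              · intro hj
                have h1 := (hvpc j).mp hj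
                have h2 := (hvmc j).mp hj
                nlinarith
              · intro hj
                rcases Bool.eq_false_or_eq_true (z' j) with hzj | hzj
                · exact hzj
                · exfalso
                  have h1 : ¬ (0 < f j.castSucc vp) := fun h => by
                    have := (hvpc j).mpr h; rw [hzj] at this; exact Bool.false_ne_true this
                  have h2 : ¬ (0 < f j.castSucc vm) := fun h => by
                    have := (hvmc j).mpr h; rw [hzj] at this; exact Bool.false_ne_true this
                  push_neg at h1 h2
                  nlinarith
            have hwne : w ≠ 0 := by
              intro h
              have := (hwc j₀).mp hj₀
              rw [h, map_zero] at this
              exact lt_irrefl 0 this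
            refine ⟨⟨w, by rw [hNdef]; exact LinearMap.mem_ker.mpr hwlst⟩, ?_, ?_⟩
            · intro h
              rw [Submodule.mk_eq_zero] at h
              exact hwne h
            · intro j
              rw [hgapp]
              exact hwc j
      by_cases hexc : ((fun _ => false : Fin n → Bool) ∈ PT ∩ PF ∧
          (fun _ => false : Fin n → Bool) ∉ pats g)
      · -- exceptional case
        obtain ⟨⟨hT, hF⟩, hnQ⟩ := hexc
        obtain ⟨vp, hvp0, hvp⟩ := hT
        obtain ⟨vm, hvm0, hvm⟩ := hF
        have hvpl : 0 < f (Fin.last n) vp := by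
          have := hvp (Fin.last n); simpa [Fin.snoc_last] using this
        have hvml : f (Fin.last n) vm ≤ 0 := by
          have := hvm (Fin.last n); simp [Fin.snoc_last] at this
          exact this
        have hvpc : ∀ j : Fin n, f j.castSucc vp ≤ 0 := by
          intro j; have := hvp j.castSucc; rw [Fin.snoc_castSucc] at this
          simp at this
          exact this
        have hvmc : ∀ j : Fin n, f j.castSucc vm ≤ 0 := by
          intro j; have := hvm j.castSucc; rw [Fin.snoc_castSucc] at this
          simp at this
          exact this
        have hvmneg : f (Fin.last n) vm < 0 := by
          rcases eq_or_lt_of_le hvml with heq | h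
          · exfalso
            apply hnQ
            refine ⟨⟨vm, by rw [hNdef]; exact LinearMap.mem_ker.mpr heq⟩, ?_, ?_⟩
            · intro h
              rw [Submodule.mk_eq_zero] at h
              exact hvm0 h
            · intro j
              rw [hgapp]
              exact iff_of_false (by simp) (not_lt.mpr (hvmc j))
          · exact h
        set a := f (Fin.last n) vp with ha
        set b := -(f (Fin.last n) vm) with hb
        have hbpos : 0 < b := by rw [hb]; linarith
        set w := b • vp + a • vm with hw
        have hwexp : ∀ j : Fin (n+1), f j w = b * f j vp + a * f j vm := by
          intro j
          rw [hw, map_add, map_smul, map_smul, smul_eq_mul, smul_eq_mul]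
        have hwlst : f (Fin.last n) w = 0 := by
          rw [hwexp, ha, hb]; ring
        have hwc : ∀ j : Fin n, f j.castSucc w ≤ 0 := by
          intro j
          rw [hwexp]
          have h1 := hvpc j
          have h2 := hvmc j
          nlinarith
        have hw0 : w = 0 := by
          by_contra hwne
          apply hnQ
          refine ⟨⟨w, by rw [hNdef]; exact LinearMap.mem_ker.mpr hwlst⟩, ?_, ?_⟩
          · intro h
            rw [Submodule.mk_eq_zero] at h
            exact hwne h
          · intro j
            rw [hgapp]
            exact iff_of_false (by simp) (not_lt.mpr (hwc j))
        have hv0 : ∀ j : Fin n, f j.castSucc vp = 0 := by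
          intro j
          have h0 : f j.castSucc w = 0 := by rw [hw0, map_zero]
          rw [hwexp] at h0
          have h1 : b * f j.castSucc vp ≤ 0 := by nlinarith [hvpc j]
          have h2 : a * f j.castSucc vm ≤ 0 := by nlinarith [hvmc j, hvpl]
          have h3 : b * f j.castSucc vp = 0 := by linarith
          rcases mul_eq_zero.mp h3 with h | h
          · exact absurd h (ne_of_gt hbpos)
          · exact h
        obtain ⟨C, hC⟩ := Submodule.exists_isCompl (ℝ ∙ vp)
        have hCrank : finrank ℝ ↥C = k' + 1 := by
          have h2 := Submodule.finrank_add_eq_of_isCompl hC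
          rw [finrank_span_singleton hvp0, hV] at h2
          omega
        set gC : Fin n → (↥C →ₗ[ℝ] ℝ) := fun j => (f j.castSucc).comp C.subtype with hgCdef
        have hgCapp : ∀ (j : Fin n) (x : ↥C), gC j x = f j.castSucc x.val := by
          intro j x
          simp [hgCdef]
        have hQC : (pats gC).ncard ≤ cB n (k'+1) := ih _ ↥C hCrank gC
        have hP'sub : pats f' ⊆ pats gC ∪ {fun _ => false} := by
          rintro z' ⟨u, hu0, hu⟩
          obtain ⟨p, c, hp, hc, hpc⟩ := Submodule.codisjoint_iff_exists_add_eq.mp hC.codisjoint u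
          have hfu : ∀ j : Fin n, f j.castSucc u = f j.castSucc c := by
            intro j
            obtain ⟨t, ht⟩ := Submodule.mem_span_singleton.mp hp
            rw [← hpc, map_add, ← ht, map_smul, hv0 j, smul_zero, zero_add]
          by_cases hcz : c = 0
          · right
            simp only [mem_singleton_iff]
            funext j
            have hj := hu j
            have hzero : f' j u = 0 := by
              show f j.castSucc u = 0
              rw [hfu j, hcz, map_zero]
            rw [hzero] at hj
            simpa using hj
          · left
            refine ⟨⟨c, hc⟩, ?_, ?_⟩
            · intro h
              rw [Submodule.mk_eq_zero] at h
              exact hcz h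
            · intro j
              rw [hgCapp]
              have hj := hu j
              show z' j = true ↔ 0 < f j.castSucc c
              rw [← hfu j]
              exact hj
        have hP'2 : (pats f').ncard ≤ cB n (k'+1) + 1 := by
          have h1 : (pats f').ncard ≤ (pats gC ∪ {fun _ => false}).ncard :=
            Set.ncard_le_ncard hP'sub (Set.toFinite _)
          have h2 : (pats gC ∪ {fun _ => false}).ncard ≤ (pats gC).ncard + 1 := by
            rw [Set.union_singleton]
            exact Set.ncard_insert_le _ _
          omega
        have hD2 : (PT ∩ PF).ncard ≤ cB n (k'+1) + 1 := by
          have h1 := Set.ncard_le_ncard hD (Set.toFinite _)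
          have h2 : (pats g ∪ {fun _ => false}).ncard ≤ (pats g).ncard + 1 := by
            rw [Set.union_singleton]
            exact Set.ncard_insert_le _ _
          omega
        have hpasc : cB (n+1) (k'+2) = cB n (k'+2) + cB n (k'+1) :=
          cB_pascal n (k'+1) (by omega)
        have hsucc : cB n (k'+2) = cB n (k'+1) + 2 * (n-1).choose (k'+1) :=
          cB_succ_k n (k'+1)
        have hch : 1 ≤ (n-1).choose (k'+1) := Nat.choose_pos (by omega)
        omega
      · -- non-exceptional case
        have hD' : PT ∩ PF ⊆ pats g := by
          intro z' hz'
          rcases hD hz' with h | h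
          · exact h
          · rw [mem_singleton_iff] at h
            subst h
            by_contra hq
            exact hexc ⟨hz', hq⟩
        have h1 : (PT ∩ PF).ncard ≤ cB n (k'+1) :=
          le_trans (Set.ncard_le_ncard hD' (Set.toFinite _)) hQ
        have hpasc : cB (n+1) (k'+2) = cB n (k'+2) + cB n (k'+1) :=
          cB_pascal n (k'+1) (by omega)
        omega





def toFunctional {k : ℕ} : (Fin k → ℝ) →ₗ[ℝ] ((Fin k → ℝ) →ₗ[ℝ] ℝ) where
  toFun c := ∑ j, c j • LinearMap.proj j
  map_add' x y := by
    simp only [Pi.add_apply, add_smul]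
    rw [Finset.sum_add_distrib]
  map_smul' r x := by
    simp only [Pi.smul_apply, smul_eq_mul, RingHom.id_apply, mul_smul]
    rw [Finset.smul_sum]

lemma toFunctional_apply {k : ℕ} (c v : Fin k → ℝ) : toFunctional c v = ∑ j, c j * v j := by
  simp [toFunctional]

lemma toFunctional_inj {k : ℕ} : Function.Injective (toFunctional (k := k)) := by
  intro c1 c2 h
  funext j
  have h2 := congrArg (fun L : (Fin k → ℝ) →ₗ[ℝ] ℝ => L (Pi.single j 1)) h
  simp only [toFunctional_apply, Pi.single_apply, mul_ite, mul_one, mul_zero,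
    Finset.sum_ite_eq', Finset.mem_univ, if_true] at h2
  exact h2

lemma exists_GP (m k : ℕ) (hk : 1 ≤ k) (hkm : k ≤ m) :
    ∃ f : Fin m → ((Fin k → ℝ) →ₗ[ℝ] ℝ), GP k f := by
  classical
  set t : Fin m → ℝ := fun i => ((i : ℕ) : ℝ) with ht
  have htinj : Function.Injective t := by
    intro i j hij
    rw [ht] at hij
    exact Fin.ext (Nat.cast_injective hij)
  set row : Fin m → (Fin k → ℝ) := fun i => (fun j => t i ^ (j : ℕ)) with hrow
  refine ⟨fun i => toFunctional (row i), ?_⟩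
  have hksub : ∀ s : Finset (Fin m), s.card = k →
      LinearIndependent ℝ (fun i : s => toFunctional (row i.val)) := by
    intro s hcard
    set e : ↥s ≃ Fin k := s.equivFin.trans (finCongr hcard) with he
    set nodes : Fin k → ℝ := fun l => t (e.symm l).val with hnodes
    have hnodeinj : Function.Injective nodes := by
      intro a b hab
      rw [hnodes] at hab
      simp only at hab
      have h1 : (e.symm a).val = (e.symm b).val := htinj hab
      have h2 : e.symm a = e.symm b := Subtype.ext h1
      exact e.symm.injective h2
    have hdet : (Matrix.vandermonde nodes).det ≠ 0 := by
      rw [Matrix.det_vandermonde]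
      apply Finset.prod_ne_zero_iff.mpr
      intro i _
      apply Finset.prod_ne_zero_iff.mpr
      intro j hj
      have hij : i < j := Finset.mem_Ioi.mp hj
      exact sub_ne_zero.mpr (fun hh => absurd (hnodeinj hh) (ne_of_gt hij))
    have hrows : LinearIndependent ℝ (fun l => Matrix.vandermonde nodes l) :=
      Matrix.linearIndependent_rows_iff_isUnit.mpr
        (Matrix.isUnit_iff_isUnit_det _ |>.mpr (isUnit_iff_ne_zero.mpr hdet))
    have hmapped := hrows.map' toFunctional (LinearMap.ker_eq_bot.mpr toFunctional_inj)
    have hcomp : (fun i : s => toFunctional (row i.val)) =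
        (toFunctional ∘ (fun l => Matrix.vandermonde nodes l)) ∘ e := by
      funext i
      simp only [Function.comp_apply]
      congr 1
      funext j
      rw [Matrix.vandermonde_apply, hnodes]
      simp only [Equiv.symm_apply_apply, hrow]
    rw [hcomp]
    exact hmapped.comp e e.injective
  intro s hs
  obtain ⟨s', hssub, _, hcard⟩ := Finset.exists_subsuperset_card_eq (Finset.subset_univ s) hs
    (by simpa using hkm)
  have hind := hksub s' hcard
  exact hind.comp (fun i : s => (⟨i.val, hssub i.2⟩ : ↥s'))
    (fun a b hab => by
      simp only [Subtype.mk.injEq] at hab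
      exact Subtype.ext hab)





lemma bridge_sub (M : ℕ) (S : Submodule ℝ (Fin M → ℝ)) :
    intersectedOrthants M S = pats (fun i => (LinearMap.proj i).comp S.subtype) := by
  ext z
  constructor
  · rintro ⟨x, hxS, hx0, hxz⟩
    refine ⟨⟨x, hxS⟩, ?_, fun i => hxz i⟩
    intro h
    rw [Submodule.mk_eq_zero] at h
    exact hx0 h
  · rintro ⟨v, hv0, hvz⟩
    refine ⟨v.val, v.2, ?_, fun i => hvz i⟩
    intro h
    exact hv0 (Subtype.ext h)

lemma bridge_range {k M : ℕ} (Φ : (Fin k → ℝ) →ₗ[ℝ] (Fin M → ℝ))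
    (hinj : Function.Injective Φ) :
    intersectedOrthants M (LinearMap.range Φ) = pats (fun i => (LinearMap.proj i).comp Φ) := by
  ext z
  constructor
  · rintro ⟨x, hxS, hx0, hxz⟩
    obtain ⟨v, rfl⟩ := hxS
    exact ⟨v, fun h => hx0 (by rw [h, map_zero]), fun i => hxz i⟩
  · rintro ⟨v, hv0, hvz⟩
    exact ⟨Φ v, LinearMap.mem_range_self _ v,
      fun h => hv0 (hinj (by rw [h, map_zero])), fun i => hvz i⟩

lemma exists_good_subspace (M K : ℕ) (hK : 1 ≤ K) (hKM : K ≤ M) :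
    ∃ S : Submodule ℝ (Fin M → ℝ), finrank ℝ S = K ∧
      cB M K ≤ (intersectedOrthants M S).ncard := by
  classical
  obtain ⟨f, hgp⟩ := exists_GP M K hK hKM
  set Φ : (Fin K → ℝ) →ₗ[ℝ] (Fin M → ℝ) := LinearMap.pi f with hΦ
  have hproj : ∀ i, (LinearMap.proj i).comp Φ = f i := fun i => LinearMap.proj_pi f i
  have hker : LinearMap.ker Φ = ⊥ := by
    rw [hΦ, LinearMap.ker_pi]
    apply (Submodule.eq_bot_iff _).mpr
    intro v hv
    rw [Submodule.mem_iInf] at hv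
    obtain ⟨s, _, hs⟩ := Finset.exists_subset_card_eq (s := (Finset.univ : Finset (Fin M))) (n := K)
      (by simpa using hKM)
    exact eq_zero_of_forall_mem_ker (Module.finrank_fin_fun ℝ) hgp hs
      (fun i _ => LinearMap.mem_ker.mp (hv i))
  have hinj : Function.Injective Φ := LinearMap.ker_eq_bot.mp hker
  refine ⟨LinearMap.range Φ, ?_, ?_⟩
  · rw [LinearMap.finrank_range_of_inj hinj, Module.finrank_fin_fun]
  · rw [bridge_range Φ hinj]
    have hfix : (fun i => (LinearMap.proj i).comp Φ) = f := funext hproj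
    rw [hfix]
    exact pats_card_ge M K (by omega) hK _ (Module.finrank_fin_fun ℝ) f hgp

lemma maxOrthants_le (M K : ℕ) (hK : 1 ≤ K) (hKM : K ≤ M) : maxOrthants M K ≤ cB M K := by
  apply csSup_le
  · obtain ⟨S, hS, _⟩ := exists_good_subspace M K hK hKM
    exact ⟨_, S, hS, rfl⟩
  · rintro n ⟨S, hS, rfl⟩
    rw [bridge_sub M S]
    exact pats_card_le M K ↥S hS _

lemma le_maxOrthants (M K : ℕ) (hK : 1 ≤ K) (hKM : K ≤ M) : cB M K ≤ maxOrthants M K := by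
  obtain ⟨S, hS, hcard⟩ := exists_good_subspace M K hK hKM
  refine le_trans hcard (le_csSup ?_ ⟨S, hS, rfl⟩)
  refine ⟨2^M, ?_⟩
  rintro n ⟨S', _, rfl⟩
  have h := Set.ncard_le_ncard (Set.subset_univ (intersectedOrthants M S')) (Set.toFinite _)
  rwa [Set.ncard_univ, Nat.card_fun, Nat.card_eq_fintype_card (α := Bool),
    Nat.card_eq_fintype_card (α := Fin M), Fintype.card_bool, Fintype.card_fin] at h

lemma cB_real : ∀ (K M : ℕ), 1 ≤ K → K ≤ M →
    (cB M K : ℝ) ≤ 2^K / ((M : ℝ) - K + 1) * (M.choose K) := by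
  intro K
  induction K with
  | zero => intro M h; omega
  | succ K ihK =>
    intro M _ hKM
    have hM1 : 1 ≤ M := by omega
    have hMne : (M:ℝ) ≠ 0 := by
      have : (0:ℝ) < M := by exact_mod_cast hM1
      linarith
    rcases Nat.eq_zero_or_pos K with hK0 | hK0
    · subst hK0
      rw [cB_one, Nat.choose_one_right]
      have hden : (M:ℝ) - (1:ℕ) + 1 = (M:ℝ) := by push_cast; ring
      rw [hden, pow_one, div_mul_cancel₀ _ hMne]
      norm_num
    · have hrec := cB_rec M (K+1) (by omega) hKM
      have hih := ihK (M-1) hK0 (by omega)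
      have hcast1 : ((M-1 : ℕ) : ℝ) = (M:ℝ) - 1 := by
        rw [Nat.cast_sub hM1]; simp
      set ch' := ((M-1).choose K : ℝ) with hch'
      set ch := (M.choose (K+1) : ℝ) with hch
      have hchoose : (M:ℝ) * ch' = ((K:ℝ)+1) * ch := by
        have hn := Nat.add_one_mul_choose_eq (M-1) K
        have hm : M - 1 + 1 = M := by omega
        rw [hm] at hn
        have := congrArg (fun x : ℕ => (x:ℝ)) hn
        push_cast at this
        rw [hch', hch]
        push_cast
        linarith
      set x := (cB M (K+1) : ℝ) with hx
      set y := (cB (M-1) K : ℝ) with hy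
      have hMK : (0:ℝ) < (M:ℝ) - K := by
        have : (K:ℝ) + 1 ≤ M := by exact_mod_cast hKM
        linarith
      have hK1pos : (0:ℝ) < (K:ℝ) + 1 := by positivity
      have hrecR : ((K:ℝ)+1) * x ≤ 2 * M * y := by
        have := (Nat.cast_le (α := ℝ)).mpr hrec
        push_cast at this
        rw [hx, hy]
        push_cast
        convert this using 2 <;> push_cast <;> ring
      have hihR : y ≤ 2^K / ((M:ℝ) - K) * ch' := by
        have h2 : ((M-1:ℕ):ℝ) - K + 1 = (M:ℝ) - K := by rw [hcast1]; ring
        rw [h2] at hih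
        exact hih
      have hgoalden : (M:ℝ) - ((K:ℕ)+1:ℕ) + 1 = (M:ℝ) - K := by push_cast; ring
      rw [hgoalden]
      rw [div_mul_eq_mul_div, le_div_iff₀ hMK]
      have e2 : y * ((M:ℝ)-K) ≤ 2^K * ch' := by
        rw [div_mul_eq_mul_div] at hihR
        exact (le_div_iff₀ hMK).mp hihR
      have hy0 : (0:ℝ) ≤ y := by rw [hy]; positivity
      have e1 : ((K:ℝ)+1) * (x * ((M:ℝ)-K)) ≤ 2*M*(y*((M:ℝ)-K)) := by
        nlinarith [mul_le_mul_of_nonneg_right hrecR hMK.le]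
      have e3 : 2*(M:ℝ)*(y*((M:ℝ)-K)) ≤ 2*M*(2^K*ch') := by
        apply mul_le_mul_of_nonneg_left e2
        positivity
      have e4 : 2*(M:ℝ)*(2^K*ch') = ((K:ℝ)+1) * (2^(K+1)*ch) := by
        calc 2*(M:ℝ)*(2^K*ch') = 2^(K+1)*((M:ℝ)*ch') := by ring
        _ = 2^(K+1)*(((K:ℝ)+1)*ch) := by rw [hchoose]
        _ = ((K:ℝ)+1) * (2^(K+1)*ch) := by ring
      have efin : ((K:ℝ)+1) * (x * ((M:ℝ)-K)) ≤ ((K:ℝ)+1) * (2^(K+1)*ch) := by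
        rw [← e4]
        linarith
      have := (mul_le_mul_iff_right₀ hK1pos).mp efin
      calc x * ((M:ℝ)-K) ≤ 2^(K+1)*ch := this
      _ = 2^(K+1) * (M.choose (K+1)) := by rw [hch]

theorem maxOrthants_recursion_and_bound (M K : ℕ) (hK : 1 ≤ K) (hKM : K ≤ M) :
    (2 ≤ K →
      (maxOrthants M K : ℝ) ≤ 2 * M / K * maxOrthants (M - 1) (K - 1)) ∧
    (maxOrthants M K : ℝ) ≤ 2 ^ K / ((M : ℝ) - K + 1) * Nat.choose M K := by
  constructor
  · intro hK2
    have hM2 : 2 ≤ M := le_trans hK2 hKM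
    have h1 : maxOrthants M K ≤ cB M K := maxOrthants_le M K hK hKM
    have h2 := cB_rec M K hK2 hKM
    have h3 : cB (M-1) (K-1) ≤ maxOrthants (M-1) (K-1) :=
      le_maxOrthants (M-1) (K-1) (by omega) (by omega)
    have hKpos : (0:ℝ) < K := by
      have : (0:ℕ) < K := by omega
      exact_mod_cast this
    calc (maxOrthants M K : ℝ) ≤ cB M K := by exact_mod_cast h1
    _ ≤ 2*M/K * cB (M-1) (K-1) := by
        rw [div_mul_eq_mul_div, le_div_iff₀ hKpos]
        have := (Nat.cast_le (α := ℝ)).mpr h2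
        push_cast at this
        linarith
    _ ≤ 2*M/K * maxOrthants (M-1) (K-1) := by
        apply mul_le_mul_of_nonneg_left
        · exact_mod_cast h3
        · positivity
  · have h1 : maxOrthants M K ≤ cB M K := maxOrthants_le M K hK hKM
    calc (maxOrthants M K : ℝ) ≤ cB M K := by exact_mod_cast h1
    _ ≤ _ := cB_real K M hK hKM


end
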